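/- Let Z and Y be real Banach spaces, B : Z → Y a bounded linear operator, and y₀* in the unit sphere of Y* such that lim sup_{t→0⁺} ( ‖B* y₀* + t B* h*‖ + ‖B* y₀* − t B* h*‖ − 2‖B* y₀*‖ ) / t ≤ 0 for every h* in the unit sphere of Y*. Suppose z₀ is in the unit sphere of Z with (B* y₀*)(z₀) = ‖B* y₀*‖. Then B z = 0 for every z ∈ Z with ‖z₀ + z‖ ≤ 1 and ‖z₀ − z‖ ≤ 1. -/

import Mathlib

open Filter Topology

set_option maxHeartbeats 1000000

/-- Let `B : Z → Y` be a bounded linear operator and `y₀*` in the unit sphere of `Y*` with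
`limsup_{t→0⁺} (‖B* y₀* + t B* h*‖ + ‖B* y₀* − t B* h*‖ − 2‖B* y₀*‖)/t ≤ 0` for every
`h*` in the unit sphere of `Y*`. If `z₀` belongs to the unit sphere of `Z` and
`(B* y₀*)(z₀) = ‖B* y₀*‖`, then `B z = 0` for every direction of flatness `z` at `z₀`. -/
theorem Bz_eq_zero_on_flat_directions
    {Z : Type*} [NormedAddCommGroup Z] [NormedSpace ℝ Z] [CompleteSpace Z]
    {Y : Type*} [NormedAddCommGroup Y] [NormedSpace ℝ Y] [CompleteSpace Y]
    (B : Z →L[ℝ] Y)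
    (y₀star : Y →L[ℝ] ℝ) (hy₀star : ‖y₀star‖ = 1)
    (hlim : ∀ hstar : Y →L[ℝ] ℝ, ‖hstar‖ = 1 →
      Filter.limsup
        (fun t : ℝ =>
          (‖y₀star ∘L B + t • (hstar ∘L B)‖ + ‖y₀star ∘L B - t • (hstar ∘L B)‖
            - 2 * ‖y₀star ∘L B‖) / t)
        (𝓝[>] (0 : ℝ)) ≤ 0)
    (z₀ : Z) (hz₀ : ‖z₀‖ = 1) (hattain : (y₀star ∘L B) z₀ = ‖y₀star ∘L B‖) :
    ∀ z : Z, ‖z₀ + z‖ ≤ 1 → ‖z₀ - z‖ ≤ 1 → B z = 0 := by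
  intro z hz1 hz2
  by_contra hBz
  obtain ⟨g, hg1, hg2⟩ := exists_dual_vector ℝ (B z) (norm_ne_zero_iff.mpr hBz)
  set F : Z →L[ℝ] ℝ := y₀star ∘L B with hF
  set G : Z →L[ℝ] ℝ := g ∘L B with hG
  have hGz : G z = ‖B z‖ := by rw [hG]; simpa using hg2
  have key : ∀ t : ℝ, 0 < t →
      2 * ‖B z‖ ≤ (‖F + t • G‖ + ‖F - t • G‖ - 2 * ‖F‖) / t := by
    intro t ht
    rw [le_div_iff₀ ht]
    have h1 : (F + t • G) (z₀ + z) ≤ ‖F + t • G‖ := by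
      calc (F + t • G) (z₀ + z) ≤ ‖(F + t • G) (z₀ + z)‖ := le_abs_self _
        _ ≤ ‖F + t • G‖ * ‖z₀ + z‖ := (F + t • G).le_opNorm _
        _ ≤ ‖F + t • G‖ * 1 := by
            exact mul_le_mul_of_nonneg_left hz1 (norm_nonneg _)
        _ = ‖F + t • G‖ := mul_one _
    have h2 : (F - t • G) (z₀ - z) ≤ ‖F - t • G‖ := by
      calc (F - t • G) (z₀ - z) ≤ ‖(F - t • G) (z₀ - z)‖ := le_abs_self _
        _ ≤ ‖F - t • G‖ * ‖z₀ - z‖ := (F - t • G).le_opNorm _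
        _ ≤ ‖F - t • G‖ * 1 := by
            exact mul_le_mul_of_nonneg_left hz2 (norm_nonneg _)
        _ = ‖F - t • G‖ := mul_one _
    have hv1 : (F + t • G) (z₀ + z) = F z₀ + F z + t * G z₀ + t * G z := by
      simp [ContinuousLinearMap.add_apply, ContinuousLinearMap.smul_apply, map_add]
      ring
    have hv2 : (F - t • G) (z₀ - z) = F z₀ - F z - t * G z₀ + t * G z := by
      simp [ContinuousLinearMap.sub_apply, ContinuousLinearMap.smul_apply, map_sub]
      ring
    have hFz₀ : F z₀ = ‖F‖ := hattain
    rw [hv1] at h1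
    rw [hv2] at h2
    rw [hGz] at h1 h2
    nlinarith [norm_nonneg (B z)]
  have hub : IsBoundedUnder (· ≤ ·) (𝓝[>] (0 : ℝ))
      (fun t : ℝ => (‖F + t • G‖ + ‖F - t • G‖ - 2 * ‖F‖) / t) := by
    refine isBoundedUnder_of_eventually_le (a := 2 * ‖G‖) ?_
    filter_upwards [self_mem_nhdsWithin] with t ht
    have ht : (0 : ℝ) < t := ht
    rw [div_le_iff₀ ht]
    have hsm : ‖t • G‖ ≤ t * ‖G‖ := by
      have := norm_smul_le t G
      rwa [Real.norm_eq_abs, abs_of_pos ht] at this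
    have ha : ‖F + t • G‖ ≤ ‖F‖ + t * ‖G‖ := by
      have := norm_add_le F (t • G); linarith
    have hb : ‖F - t • G‖ ≤ ‖F‖ + t * ‖G‖ := by
      have := norm_sub_le F (t • G); linarith
    linarith
  have hfreq : ∃ᶠ t in 𝓝[>] (0 : ℝ),
      2 * ‖B z‖ ≤ (‖F + t • G‖ + ‖F - t • G‖ - 2 * ‖F‖) / t := by
    have hev : ∀ᶠ t in 𝓝[>] (0 : ℝ),
        2 * ‖B z‖ ≤ (‖F + t • G‖ + ‖F - t • G‖ - 2 * ‖F‖) / t := by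
      filter_upwards [self_mem_nhdsWithin] with t ht
      exact key t ht
    exact hev.frequently
  have hge : 2 * ‖B z‖ ≤ Filter.limsup
      (fun t : ℝ => (‖F + t • G‖ + ‖F - t • G‖ - 2 * ‖F‖) / t) (𝓝[>] (0 : ℝ)) :=
    le_limsup_of_frequently_le hfreq hub
  have hle := hlim g hg1
  have hpos : 0 < ‖B z‖ := norm_pos_iff.mpr hBz
  rw [← hG] at hle
  linarith
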